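/- Let (A,∘) be a Novikov algebra and φ a 1/2-derivation of (A,∘). Then for all x,y,z ∈ A: (x∘y)∘φ(z) = (x∘φ(y))∘z, and (x∘y)∘φ(z) − (y∘x)∘φ(z) = φ(x)∘(y∘z) − φ(y)∘(x∘z). -/
import Mathlib


/-- For a 1/2-derivation φ of a Novikov algebra (A,∘):
(x∘y)∘φ(z) = (x∘φ(y))∘z and
(x∘y)∘φ(z) − (y∘x)∘φ(z) = φ(x)∘(y∘z) − φ(y)∘(x∘z). -/
theorem stmt15 {k A : Type*} [Field k] [AddCommGroup A] [Module k A]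
    (hchar : (2:k) ≠ 0)
    (cir : A →ₗ[k] A →ₗ[k] A)
    (hnov1 : ∀ x y z : A, cir (cir x y) z = cir (cir x z) y)
    (hnov2 : ∀ x y z : A, cir (cir x y) z - cir x (cir y z) = cir (cir y x) z - cir y (cir x z))
    (φ : A →ₗ[k] A)
    (hφ : ∀ x y : A, (2:k) • φ (cir x y) = cir (φ x) y + cir x (φ y)) :
    (∀ x y z : A, cir (cir x y) (φ z) = cir (cir x (φ y)) z) ∧
    (∀ x y z : A, cir (cir x y) (φ z) - cir (cir y x) (φ z)
      = cir (φ x) (cir y z) - cir (φ y) (cir x z)) := by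
  constructor
  · intro x y z
    have E1 := hφ (cir x y) z
    have E2 := hφ (cir x z) y
    have F : φ (cir (cir x y) z) = φ (cir (cir x z) y) := congrArg φ (hnov1 x y z)
    have H3 : (2:k) • cir (φ (cir x y)) z
        = cir (cir (φ x) y) z + cir (cir x (φ y)) z := by
      have := congrArg (fun w => cir w z) (hφ x y)
      simpa using this
    have H4 : (2:k) • cir (φ (cir x z)) y
        = cir (cir (φ x) z) y + cir (cir x (φ z)) y := by
      have := congrArg (fun w => cir w y) (hφ x z)
      simpa using this
    have G1 := hnov1 (φ x) y z
    have G2 := hnov1 x y (φ z)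
    have G3 := hnov1 x (φ y) z
    linear_combination (norm := module)
      (-2:k) • E1 + (2:k) • E2 + (4:k) • F - H3 + H4 - G1 - G2 - (2:k) • G3
  · intro x y z
    have K1 := hφ (cir x y) z
    have K2 := hφ x (cir y z)
    have K3 := hφ (cir y x) z
    have K4 := hφ y (cir x z)
    have F2 : φ (cir (cir x y) z) - φ (cir x (cir y z))
        = φ (cir (cir y x) z) - φ (cir y (cir x z)) := by
      have := congrArg φ (hnov2 x y z)
      simpa using this
    have H3' : (2:k) • cir (φ (cir x y)) z
        = cir (cir (φ x) y) z + cir (cir x (φ y)) z := by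
      have := congrArg (fun w => cir w z) (hφ x y)
      simpa using this
    have H3'' : (2:k) • cir (φ (cir y x)) z
        = cir (cir (φ y) x) z + cir (cir y (φ x)) z := by
      have := congrArg (fun w => cir w z) (hφ y x)
      simpa using this
    have Hr1 : (2:k) • cir x (φ (cir y z))
        = cir x (cir (φ y) z) + cir x (cir y (φ z)) := by
      have := congrArg (fun w => cir x w) (hφ y z)
      simpa using this
    have Hr2 : (2:k) • cir y (φ (cir x z))
        = cir y (cir (φ x) z) + cir y (cir x (φ z)) := by
      have := congrArg (fun w => cir y w) (hφ x z)
      simpa using this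
    have N1 := hnov2 (φ x) y z
    have N2 := hnov2 x (φ y) z
    have N3 := hnov2 x y (φ z)
    linear_combination (norm := module)
      (-2:k) • K1 + (2:k) • K2 + (2:k) • K3 + (-2:k) • K4 + (4:k) • F2
      - H3' + Hr1 + H3'' - Hr2 - N1 - N2 - N3
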